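/- arXiv:1401.2689 — 2 statements merged into one kernel-verified Lean document; each statement's English description precedes it below -/
import Mathlib

section
/- For every real x₀ ≥ 2, ∫_{2}^{x₀} θ(t)/(t·(log t)²) dt = π(x₀) − θ(x₀)/log x₀. -/
open Real Finset

/-- The first Chebyshev function `θ(x) = ∑_{p ≤ x} log p`, sum over primes `p ≤ x`. -/
noncomputable def chebyshevTheta (x : ℝ) : ℝ :=
  ∑ p ∈ (Finset.range (⌊x⌋₊ + 1)).filter Nat.Prime, Real.log p

/-- The prime counting function `π(x)`: the number of primes not exceeding `x`. -/
noncomputable def primePi (x : ℝ) : ℝ :=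
  ((Finset.range (⌊x⌋₊ + 1)).filter Nat.Prime).card

lemma theta_mono : Monotone chebyshevTheta := by
  intro x y hxy
  unfold chebyshevTheta
  apply Finset.sum_le_sum_of_subset_of_nonneg
  · apply Finset.filter_subset_filter
    exact Finset.range_subset_range.2 (by
      have := Nat.floor_le_floor hxy
      omega)
  · intro p hp _
    have hp2 : 2 ≤ p := (Finset.mem_filter.1 hp).2.two_le
    exact Real.log_nonneg (by exact_mod_cast Nat.one_le_iff_ne_zero.2 (by omega))

lemma theta_floor_eq {t x : ℝ} (h : ⌊t⌋₊ = ⌊x⌋₊) : chebyshevTheta t = chebyshevTheta x := by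
  unfold chebyshevTheta; rw [h]

lemma pi_floor_eq {t x : ℝ} (h : ⌊t⌋₊ = ⌊x⌋₊) : primePi t = primePi x := by
  unfold primePi; rw [h]

lemma theta_meas : Measurable chebyshevTheta := theta_mono.measurable

lemma denom_pos {t : ℝ} (ht : 2 ≤ t) : 0 < t * Real.log t ^ 2 := by
  have h1 : (0:ℝ) < Real.log t := Real.log_pos (by linarith)
  positivity

lemma hasDeriv_aux {t : ℝ} (ht : 2 ≤ t) :
    HasDerivAt (fun u => -(Real.log u)⁻¹) (1 / (t * Real.log t ^ 2)) t := by
  have ht0 : t ≠ 0 := by linarith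
  have hlog : Real.log t ≠ 0 := ne_of_gt (Real.log_pos (by linarith))
  have h1 : HasDerivAt Real.log t⁻¹ t := Real.hasDerivAt_log ht0
  have h2 := (h1.inv hlog).neg
  refine h2.congr_deriv ?_
  field_simp

lemma integA {a b : ℝ} (ha : 2 ≤ a) (hab : a ≤ b) :
    ∫ t in a..b, 1 / (t * Real.log t ^ 2) = (Real.log a)⁻¹ - (Real.log b)⁻¹ := by
  have hmem : ∀ t ∈ Set.uIcc a b, 2 ≤ t := by
    rw [Set.uIcc_of_le hab]
    intro t ht; linarith [ht.1]
  have hcont : ContinuousOn (fun t => 1 / (t * Real.log t ^ 2)) (Set.uIcc a b) := by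
    apply ContinuousOn.div continuousOn_const
    · exact (continuousOn_id.mul ((Real.continuousOn_log.mono (fun t ht => by
        have := hmem t ht; exact ne_of_gt (by linarith))).pow 2))
    · intro t ht; exact ne_of_gt (denom_pos (hmem t ht))
  have := intervalIntegral.integral_eq_sub_of_hasDerivAt
    (f := fun u => -(Real.log u)⁻¹) (fun t ht => hasDeriv_aux (hmem t ht))
    (hcont.intervalIntegrable)
  rw [this]; ring

/-- integrand -/
noncomputable def F (t : ℝ) : ℝ := chebyshevTheta t / (t * Real.log t ^ 2)

lemma F_intable {a b : ℝ} (ha : 2 ≤ a) (hab : a ≤ b) :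
    IntervalIntegrable F MeasureTheory.volume a b := by
  have hmeas : Measurable F := by
    apply Measurable.div theta_meas
    exact (measurable_id.mul ((Real.measurable_log).pow_const 2))
  rw [intervalIntegrable_iff, Set.uIoc_of_le hab]
  refine MeasureTheory.Measure.integrableOn_of_bounded
    (M := chebyshevTheta b / (2 * Real.log 2 ^ 2)) ?_ hmeas.aestronglyMeasurable ?_
  · rw [Real.volume_Ioc]; exact ENNReal.ofReal_ne_top
  · apply MeasureTheory.ae_restrict_of_forall_mem measurableSet_Ioc
    intro t ht
    have ht2 : 2 ≤ t := le_trans ha (le_of_lt ht.1)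
    have hpos := denom_pos ht2
    have hθ0 : 0 ≤ chebyshevTheta t := by
      have := theta_mono (le_refl t)
      unfold chebyshevTheta
      apply Finset.sum_nonneg
      intro p hp
      have hp2 : 2 ≤ p := (Finset.mem_filter.1 hp).2.two_le
      exact Real.log_nonneg (by exact_mod_cast hp2.trans' (by norm_num))
    have hθb : chebyshevTheta t ≤ chebyshevTheta b := theta_mono ht.2
    show |chebyshevTheta t / (t * Real.log t ^ 2)| ≤ _
    rw [abs_of_nonneg (div_nonneg hθ0 hpos.le)]
    have hden : 2 * Real.log 2 ^ 2 ≤ t * Real.log t ^ 2 := by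
      have hl2 : (0:ℝ) < Real.log 2 := Real.log_pos (by norm_num)
      have hll : Real.log 2 ≤ Real.log t := Real.log_le_log (by norm_num) ht2
      have : Real.log 2 ^ 2 ≤ Real.log t ^ 2 := by nlinarith
      nlinarith
    have h20 : (0:ℝ) < 2 * Real.log 2 ^ 2 := by
      have := Real.log_pos (show (1:ℝ) < 2 by norm_num); positivity
    exact div_le_div₀ (hθ0.trans hθb) hθb h20 hden


lemma F_const_piece {n : ℕ} (hn : 2 ≤ n) {a b : ℝ} (ha : (n:ℝ) ≤ a) (hab : a ≤ b)
    (hb : b ≤ (n:ℝ) + 1) :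
    ∫ t in a..b, F t = chebyshevTheta n * ((Real.log a)⁻¹ - (Real.log b)⁻¹) := by
  have ha2 : (2:ℝ) ≤ a := le_trans (by exact_mod_cast hn) ha
  have hae : ∀ᵐ t : ℝ ∂MeasureTheory.volume, t ∈ Set.uIoc a b →
      F t = chebyshevTheta n * (1 / (t * Real.log t ^ 2)) := by
    have h1 : ∀ᵐ t : ℝ ∂MeasureTheory.volume, t ≠ b := by
      refine (MeasureTheory.ae_iff).2 ?_
      simpa using MeasureTheory.measure_singleton b
    filter_upwards [h1] with t hne ht
    rw [Set.uIoc_of_le hab] at ht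
    have htb : t < b := lt_of_le_of_ne ht.2 hne
    have hfl : ⌊t⌋₊ = n := by
      rw [Nat.floor_eq_iff' (by omega)]
      exact ⟨le_trans ha ht.1.le, by push_cast; linarith⟩
    rw [show F t = chebyshevTheta t / (t * Real.log t ^ 2) from rfl,
        theta_floor_eq (x := (n:ℝ)) (by rw [hfl, Nat.floor_natCast])]
    ring
  rw [intervalIntegral.integral_congr_ae hae, intervalIntegral.integral_const_mul,
      integA ha2 hab]

lemma theta_succ (m : ℕ) : chebyshevTheta ((m:ℝ)+1) =
    chebyshevTheta m + (if Nat.Prime (m+1) then Real.log (m+1) else 0) := by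
  have h1 : ⌊(m:ℝ)+1⌋₊ = m + 1 := by
    rw [show (m:ℝ)+1 = ((m+1 : ℕ) : ℝ) by push_cast; ring, Nat.floor_natCast]
  unfold chebyshevTheta
  rw [h1, Nat.floor_natCast, Finset.range_add_one, Finset.filter_insert]
  split
  · rw [Finset.sum_insert (by simp)]
    push_cast; ring
  · ring

lemma pi_succ (m : ℕ) : primePi ((m:ℝ)+1) =
    primePi m + (if Nat.Prime (m+1) then 1 else 0) := by
  have h1 : ⌊(m:ℝ)+1⌋₊ = m + 1 := by
    rw [show (m:ℝ)+1 = ((m+1 : ℕ) : ℝ) by push_cast; ring, Nat.floor_natCast]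
  unfold primePi
  rw [h1, Nat.floor_natCast, Finset.range_add_one, Finset.filter_insert]
  split
  · rw [Finset.card_insert_of_notMem (by simp)]
    push_cast; ring
  · ring

lemma key_nat : ∀ m : ℕ, 2 ≤ m →
    ∫ t in (2:ℝ)..(m:ℝ), F t = primePi m - chebyshevTheta m / Real.log m := by
  intro m hm
  induction m, hm using Nat.le_induction with
  | base =>
    have h2 : ((2:ℕ):ℝ) = (2:ℝ) := by norm_num
    rw [h2, intervalIntegral.integral_same]
    have hfl : ⌊(2:ℝ)⌋₊ = 2 := by norm_num
    have hfilter : (Finset.range 3).filter Nat.Prime = {2} := by decide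
    have hθ : chebyshevTheta 2 = Real.log 2 := by
      unfold chebyshevTheta; rw [hfl]; norm_num [hfilter]
    have hπ : primePi 2 = 1 := by
      unfold primePi; rw [hfl]; norm_num [hfilter]
    rw [hθ, hπ, div_self (ne_of_gt (Real.log_pos (by norm_num)))]
    ring
  | succ m hm ih =>
    have hm2 : (2:ℝ) ≤ (m:ℝ) := by exact_mod_cast hm
    have hmm : (m:ℝ) ≤ (m:ℝ) + 1 := by linarith
    have hcast : ((m+1 : ℕ) : ℝ) = (m:ℝ) + 1 := by push_cast; ring
    rw [hcast, ← intervalIntegral.integral_add_adjacent_intervals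
      (F_intable (le_refl 2) hm2) (F_intable hm2 hmm), ih,
      F_const_piece hm (le_refl _) hmm (le_refl _), theta_succ, pi_succ]
    have hLm : Real.log m ≠ 0 := ne_of_gt (Real.log_pos (by exact_mod_cast (by omega : 1 < m)))
    have hLm1 : Real.log ((m:ℝ)+1) ≠ 0 := by
      refine ne_of_gt (Real.log_pos ?_); linarith
    have hcast2 : Real.log ((m:ℕ)+1 : ℝ) = Real.log ((m:ℝ)+1) := by push_cast; ring_nf
    split
    · push_cast
      field_simp
      ring
    · push_cast
      field_simp
      ring

theorem integral_theta_eq (x₀ : ℝ) (hx₀ : 2 ≤ x₀) :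
    ∫ t in (2:ℝ)..x₀, chebyshevTheta t / (t * (Real.log t) ^ 2) =
      primePi x₀ - chebyshevTheta x₀ / Real.log x₀ := by
  show ∫ t in (2:ℝ)..x₀, F t = _
  set n := ⌊x₀⌋₊ with hn
  have hn2 : 2 ≤ n := Nat.le_floor (by exact_mod_cast hx₀)
  have hnx : (n:ℝ) ≤ x₀ := Nat.floor_le (by linarith)
  have hxn1 : x₀ < (n:ℝ) + 1 := Nat.lt_floor_add_one x₀
  have hn2' : (2:ℝ) ≤ (n:ℝ) := by exact_mod_cast hn2
  have hflx : ⌊x₀⌋₊ = ⌊((n:ℝ))⌋₊ := by rw [Nat.floor_natCast]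
  rw [← intervalIntegral.integral_add_adjacent_intervals
    (F_intable (le_refl 2) hn2') (F_intable hn2' hnx), key_nat n hn2,
    F_const_piece hn2 (le_refl _) hnx hxn1.le,
    theta_floor_eq hflx, pi_floor_eq hflx]
  have hLn : Real.log (n:ℝ) ≠ 0 := ne_of_gt (Real.log_pos (by linarith))
  have hLx : Real.log x₀ ≠ 0 := ne_of_gt (Real.log_pos (by linarith))
  field_simp
  ring
end

section
/- Let ε₀(t) = √(8/(17π)) · X^{1/2} · e^{−X}, where X = √((log t)/6.455), and let g(t) = t·ε₀(t)/(log t)^{33/20}. Then for all real t ≥ 149, ε₀(t)/(log t)² < g′(t), where g′ denotes the derivative of g. -/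
open Real

/-- `ε₀(t) = √(8/(17π)) · X^{1/2} · e^{−X}` where `X = √((log t)/6.455)`. -/
noncomputable def eps0 (t : ℝ) : ℝ :=
  Real.sqrt (8 / (17 * Real.pi)) * Real.sqrt (Real.sqrt (Real.log t / 6.455))
    * Real.exp (-(Real.sqrt (Real.log t / 6.455)))

/-- `g(t) = t·ε₀(t)/(log t)^{33/20}`. -/
noncomputable def g (t : ℝ) : ℝ := t * eps0 t / (Real.log t) ^ ((33:ℝ)/20)

theorem eps0_lt_deriv_g (t : ℝ) (ht : 149 ≤ t) :
    eps0 t / (Real.log t) ^ 2 < deriv g t := by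
  have ht0 : (0:ℝ) < t := by linarith
  have hL5 : (5:ℝ) < Real.log t := by
    have h1 : Real.exp 5 < 149 := by
      have h : Real.exp 5 = (Real.exp 1)^(5:ℕ) := by
        rw [← Real.exp_nat_mul]; norm_num
      rw [h]
      calc (Real.exp 1)^(5:ℕ) < 2.7182818286^(5:ℕ) := by
            gcongr
            exact Real.exp_one_lt_d9
        _ < 149 := by norm_num
    calc (5:ℝ) = Real.log (Real.exp 5) := (Real.log_exp 5).symm
      _ < Real.log 149 := Real.log_lt_log (Real.exp_pos 5) h1
      _ ≤ Real.log t := Real.log_le_log (by norm_num) ht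
  set L := Real.log t with hLdef
  have hL0 : (0:ℝ) < L := by linarith
  set X := Real.sqrt (L / 6.455) with hXdef
  have hXsq : X ^ 2 = L / 6.455 := Real.sq_sqrt (by positivity)
  have hX88 : (0.88:ℝ) ≤ X := by
    rw [hXdef, show (0.88:ℝ) ≤ Real.sqrt (L/6.455) ↔ (0.88:ℝ)^2 ≤ L/6.455 from
      Real.le_sqrt (by norm_num) (by positivity)]
    rw [le_div_iff₀ (by norm_num)]
    nlinarith
  have hX0 : (0:ℝ) < X := by linarith
  set S := Real.sqrt X with hSdef
  have hSsq : S ^ 2 = X := Real.sq_sqrt hX0.le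
  have hS0 : (0:ℝ) < S := Real.sqrt_pos.mpr hX0
  set E := Real.exp (-X) with hEdef
  have hE0 : (0:ℝ) < E := Real.exp_pos _
  set C := Real.sqrt (8 / (17 * Real.pi)) with hCdef
  have hC0 : (0:ℝ) < C := Real.sqrt_pos.mpr (by positivity)
  set P := L ^ ((33:ℝ)/20) with hPdef
  have hP0 : (0:ℝ) < P := Real.rpow_pos_of_pos hL0 _
  -- derivative chain
  have h1 : HasDerivAt Real.log t⁻¹ t := Real.hasDerivAt_log (ne_of_gt ht0)
  have h2 : HasDerivAt (fun u : ℝ => Real.log u / 6.455) (t⁻¹ / 6.455) t := h1.div_const _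
  have h3 : HasDerivAt (fun u : ℝ => Real.sqrt (Real.log u / 6.455))
      (1 / (2 * X) * (t⁻¹ / 6.455)) t := by
    have := (Real.hasDerivAt_sqrt (x := L / 6.455) (by positivity)).comp t h2
    simpa [Function.comp_def, ← hXdef] using this
  have h4 : HasDerivAt (fun u : ℝ => Real.sqrt (Real.sqrt (Real.log u / 6.455)))
      (1 / (2 * S) * (1 / (2 * X) * (t⁻¹ / 6.455))) t := by
    have := (Real.hasDerivAt_sqrt (x := X) (ne_of_gt hX0)).comp t h3
    simpa [Function.comp_def, ← hSdef] using this
  have h5 : HasDerivAt (fun u : ℝ => Real.exp (-(Real.sqrt (Real.log u / 6.455))))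
      (E * -(1 / (2 * X) * (t⁻¹ / 6.455))) t := h3.neg.exp
  have h6 : HasDerivAt eps0
      ((C * (1 / (2 * S) * (1 / (2 * X) * (t⁻¹ / 6.455)))) * E
        + (C * S) * (E * -(1 / (2 * X) * (t⁻¹ / 6.455)))) t :=
    (h4.const_mul C).mul h5
  have h7 : HasDerivAt (fun u : ℝ => u * eps0 u)
      (1 * eps0 t + t * ((C * (1 / (2 * S) * (1 / (2 * X) * (t⁻¹ / 6.455)))) * E
        + (C * S) * (E * -(1 / (2 * X) * (t⁻¹ / 6.455))))) t :=
    (hasDerivAt_id t).mul h6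
  have h8 : HasDerivAt (fun u : ℝ => (Real.log u) ^ ((33:ℝ)/20))
      ((33/20) * L ^ ((33:ℝ)/20 - 1) * t⁻¹) t := by
    have := (Real.hasDerivAt_rpow_const (x := L) (p := (33:ℝ)/20)
      (Or.inl (ne_of_gt hL0))).comp t h1
    simpa [Function.comp_def] using this
  have h9 : HasDerivAt g
      (((1 * eps0 t + t * ((C * (1 / (2 * S) * (1 / (2 * X) * (t⁻¹ / 6.455)))) * E
        + (C * S) * (E * -(1 / (2 * X) * (t⁻¹ / 6.455))))) * P
        - t * eps0 t * ((33/20) * L ^ ((33:ℝ)/20 - 1) * t⁻¹)) / P ^ 2) t :=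
    h7.div h8 (ne_of_gt hP0)
  have heps : eps0 t = C * S * E := by
    simp only [eps0, ← hCdef, ← hLdef, ← hXdef, ← hSdef, ← hEdef]
  have heps0 : (0:ℝ) < eps0 t := by rw [heps]; positivity
  have hPL : L ^ ((33:ℝ)/20 - 1) * L = P := by
    rw [hPdef]
    have h := Real.rpow_add hL0 ((33:ℝ)/20 - 1) 1
    rw [Real.rpow_one] at h
    rw [← h]; norm_num
  have hD : deriv g t = eps0 t * (1 - 1/(12.91*X) - 7/(5*L)) / P := by
    rw [h9.deriv, heps, ← hPL]
    have hQ : 0 < L ^ ((33:ℝ)/20 - 1) := by positivity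
    generalize L ^ ((33:ℝ)/20 - 1) = Q at hQ ⊢
    have hL' : L = 6.455 * S^4 := by
      linear_combination (-6.455:ℝ) * hXsq - 6.455 * (X + S^2) * hSsq
    have hX' : X = S^2 := hSsq.symm
    rw [hX', hL']
    have hQne : Q ≠ 0 := ne_of_gt hQ
    have hSne : S ≠ 0 := ne_of_gt hS0
    have htne : t ≠ 0 := ne_of_gt ht0
    field_simp
    ring
  -- numeric bound on the bracket
  have hB : (0.631:ℝ) ≤ 1 - 1/(12.91*X) - 7/(5*L) := by
    have h1 : 1/(12.91*X) ≤ 1/(12.91*0.88) := by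
      apply one_div_le_one_div_of_le (by norm_num)
      nlinarith
    have h2 : 7/(5*L) ≤ 7/25 := by
      apply div_le_div_of_nonneg_left (by norm_num) (by norm_num)
      nlinarith
    nlinarith
  -- bound P < 0.625 * L^2
  have h516 : (1.6:ℝ) < (5:ℝ) ^ ((7:ℝ)/20) := by
    apply lt_of_pow_lt_pow_left₀ 20 (le_of_lt (Real.rpow_pos_of_pos (by norm_num) _))
    have : ((5:ℝ) ^ ((7:ℝ)/20)) ^ (20:ℕ) = (5:ℝ)^(7:ℕ) := by
      rw [← Real.rpow_natCast ((5:ℝ) ^ ((7:ℝ)/20)) 20, ← Real.rpow_mul (by norm_num)]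
      norm_num
    rw [this]; norm_num
  have hL716 : (1.6:ℝ) < L ^ ((7:ℝ)/20) :=
    lt_of_lt_of_le h516 (Real.rpow_le_rpow (by norm_num) hL5.le (by norm_num))
  have hPlt : P < 0.625 * L^2 := by
    have hPeq : P = L^2 * L ^ (-((7:ℝ)/20)) := by
      rw [hPdef, ← Real.rpow_natCast L 2, ← Real.rpow_add hL0]
      norm_num
    have hinv : L ^ (-((7:ℝ)/20)) < 0.625 := by
      rw [Real.rpow_neg hL0.le]
      rw [inv_lt_comm₀ (Real.rpow_pos_of_pos hL0 _) (by norm_num)]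
      calc (0.625:ℝ)⁻¹ = 1.6 := by norm_num
        _ < L ^ ((7:ℝ)/20) := hL716
    have hL2 : (0:ℝ) < L^2 := by positivity
    calc P = L^2 * L ^ (-((7:ℝ)/20)) := hPeq
      _ < L^2 * 0.625 := by exact mul_lt_mul_of_pos_left hinv hL2
      _ = 0.625 * L^2 := by ring
  -- finish
  rw [hD, div_lt_div_iff₀ (by positivity) hP0]
  have hL2 : (0:ℝ) < L^2 := by positivity
  have key : P < (1 - 1/(12.91*X) - 7/(5*L)) * L^2 := by
    calc P < 0.625 * L^2 := hPlt
      _ ≤ (1 - 1/(12.91*X) - 7/(5*L)) * L^2 := by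
          apply mul_le_mul_of_nonneg_right _ hL2.le
          linarith
  calc eps0 t * P < eps0 t * ((1 - 1/(12.91*X) - 7/(5*L)) * L^2) :=
        mul_lt_mul_of_pos_left key heps0
    _ = eps0 t * (1 - 1/(12.91*X) - 7/(5*L)) * L^2 := by ring
end
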